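/- Localized bilinear kernel estimate: let K ∈ L^∞(ℝ^{n+1}) and ψ a bounded function supported in the ball B(0, 2^j) ⊂ ℝ^{n+1}, 0 ≤ ψ ≤ 1. Then for F, G ∈ L¹ ∩ L²(ℝ^{n+1}), |⟨(ψK) ∗ F, G⟩| ≤ ‖ψK‖_∞ ( ∑_{λ ∈ 2^jℤ^{n+1}} ‖F χ_{Q_λ}‖_1² )^{1/2} ( ∑_{λ ∈ 2^jℤ^{n+1}} ‖G χ_{\widetilde{Q}_λ}‖_1² )^{1/2}, where Q_λ is the cube of side 2^j centered at λ and \widetilde{Q}_λ the cube of side 2^{j+2} with the same center. -/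

import Mathlib

open MeasureTheory ENNReal Set

noncomputable section

def latCube (n : ℕ) (j : ℕ) (lam : (Fin n → ℤ) × ℤ) : Set ((Fin n → ℝ) × ℝ) :=
  {z | (∀ i, z.1 i ∈ Set.Ico ((2 : ℝ) ^ j * lam.1 i - 2 ^ j / 2)
          ((2 : ℝ) ^ j * lam.1 i + 2 ^ j / 2)) ∧
    z.2 ∈ Set.Ico ((2 : ℝ) ^ j * lam.2 - 2 ^ j / 2) ((2 : ℝ) ^ j * lam.2 + 2 ^ j / 2)}

/-- The dilated (closed) cube of side `2^{j+2}` with the same center `2^j λ`. -/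
def latCubeT (n : ℕ) (j : ℕ) (lam : (Fin n → ℤ) × ℤ) : Set ((Fin n → ℝ) × ℝ) :=
  {z | (∀ i, |z.1 i - (2 : ℝ) ^ j * lam.1 i| ≤ 2 ^ (j + 2) / 2) ∧
    |z.2 - (2 : ℝ) ^ j * lam.2| ≤ 2 ^ (j + 2) / 2}

lemma ico_mem_iff (j : ℕ) (x : ℝ) (m : ℤ) :
    x ∈ Set.Ico ((2 : ℝ) ^ j * m - 2 ^ j / 2) ((2 : ℝ) ^ j * m + 2 ^ j / 2) ↔
      m = ⌊x / 2 ^ j + 1 / 2⌋ := by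
  have h : (0:ℝ) < 2 ^ j := by positivity
  rw [Set.mem_Ico, eq_comm, Int.floor_eq_iff, ← sub_le_iff_le_add, le_div_iff₀ h,
    ← lt_sub_iff_add_lt, div_lt_iff₀ h]
  constructor <;> rintro ⟨h1, h2⟩ <;> constructor <;> nlinarith

def cubeKey (n : ℕ) (j : ℕ) (z : (Fin n → ℝ) × ℝ) : (Fin n → ℤ) × ℤ :=
  (fun i => ⌊z.1 i / 2 ^ j + 1 / 2⌋, ⌊z.2 / 2 ^ j + 1 / 2⌋)

lemma mem_latCube_iff (n j : ℕ) (lam : (Fin n → ℤ) × ℤ) (z : (Fin n → ℝ) × ℝ) :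
    z ∈ latCube n j lam ↔ lam = cubeKey n j z := by
  simp only [latCube, Set.mem_setOf_eq, ico_mem_iff, cubeKey, Prod.ext_iff, funext_iff]

lemma latCube_cover (n j : ℕ) : (⋃ lam, latCube n j lam) = Set.univ :=
  Set.eq_univ_of_forall fun z =>
    Set.mem_iUnion.2 ⟨cubeKey n j z, (mem_latCube_iff n j _ z).2 rfl⟩

lemma latCube_disj (n j : ℕ) : Pairwise (Function.onFun Disjoint (latCube n j)) := by
  intro a b hab
  refine Set.disjoint_left.2 fun z hz hz' => hab ?_
  rw [mem_latCube_iff] at hz hz'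
  rw [hz, hz']

lemma latCube_meas (n j : ℕ) (lam : (Fin n → ℤ) × ℤ) : MeasurableSet (latCube n j lam) := by
  have : latCube n j lam =
      (⋂ i, (fun z : (Fin n → ℝ) × ℝ => z.1 i) ⁻¹' Set.Ico ((2 : ℝ) ^ j * lam.1 i - 2 ^ j / 2)
          ((2 : ℝ) ^ j * lam.1 i + 2 ^ j / 2)) ∩
        ((fun z : (Fin n → ℝ) × ℝ => z.2) ⁻¹'
          Set.Ico ((2 : ℝ) ^ j * lam.2 - 2 ^ j / 2) ((2 : ℝ) ^ j * lam.2 + 2 ^ j / 2)) := by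
    ext z; simp [latCube, Set.mem_iInter]
  rw [this]
  exact (MeasurableSet.iInter fun i =>
      ((measurable_pi_apply i).comp measurable_fst) measurableSet_Ico).inter
    (measurable_snd measurableSet_Ico)

lemma latCubeT_meas (n j : ℕ) (lam : (Fin n → ℤ) × ℤ) : MeasurableSet (latCubeT n j lam) := by
  have : latCubeT n j lam =
      (⋂ i, {z : (Fin n → ℝ) × ℝ | |z.1 i - (2 : ℝ) ^ j * lam.1 i| ≤ 2 ^ (j + 2) / 2}) ∩
        {z : (Fin n → ℝ) × ℝ | |z.2 - (2 : ℝ) ^ j * lam.2| ≤ 2 ^ (j + 2) / 2} := by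
    ext z; simp [latCubeT, Set.mem_iInter]
  rw [this]
  refine ((MeasurableSet.iInter fun i => ?_).inter ?_)
  · exact (isClosed_le (by fun_prop) continuous_const).measurableSet
  · exact (isClosed_le (by fun_prop) continuous_const).measurableSet

lemma sq_sum_to_abs (c : ℝ) (hc : 0 ≤ c) (a : ℝ) (h : a ^ 2 ≤ c ^ 2) : |a| ≤ c := by
  have := Real.sqrt_le_sqrt h
  rwa [Real.sqrt_sq_eq_abs, Real.sqrt_sq hc] at this

lemma latCube_geom (n j : ℕ) (lam : (Fin n → ℤ) × ℤ) (y z : (Fin n → ℝ) × ℝ)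
    (hy : y ∈ latCube n j lam)
    (hz : Real.sqrt ((∑ i, ((z - y).1 i) ^ 2) + ((z - y).2) ^ 2) ≤ 2 ^ j) :
    z ∈ latCubeT n j lam := by
  have h2 : (0:ℝ) ≤ 2 ^ j := by positivity
  have h0 : (0:ℝ) ≤ (∑ i, ((z - y).1 i) ^ 2) + ((z - y).2) ^ 2 := by positivity
  have hsum : (∑ i, ((z - y).1 i) ^ 2) + ((z - y).2) ^ 2 ≤ ((2:ℝ) ^ j) ^ 2 := by
    nlinarith [Real.sq_sqrt h0, Real.sqrt_nonneg ((∑ i, ((z - y).1 i) ^ 2) + ((z - y).2) ^ 2)]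
  have hpow : (2:ℝ) ^ (j + 2) / 2 = 2 * 2 ^ j := by
    rw [pow_add]; ring
  obtain ⟨hy1, hy2⟩ := hy
  constructor
  · intro i
    have h1 : ((z - y).1 i) ^ 2 ≤ ((2:ℝ) ^ j) ^ 2 := by
      have := Finset.single_le_sum (f := fun i => ((z - y).1 i) ^ 2)
        (fun i _ => sq_nonneg _) (Finset.mem_univ i)
      nlinarith [sq_nonneg ((z - y).2)]
    have habs : |z.1 i - y.1 i| ≤ 2 ^ j := sq_sum_to_abs _ h2 _ h1
    have hyc : |y.1 i - (2:ℝ) ^ j * lam.1 i| ≤ 2 ^ j / 2 := by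
      obtain ⟨ha, hb⟩ := hy1 i
      rw [abs_le]; constructor <;> linarith
    have := abs_sub_le (z.1 i) (y.1 i) ((2:ℝ) ^ j * lam.1 i)
    rw [hpow]; linarith
  · have h1 : ((z - y).2) ^ 2 ≤ ((2:ℝ) ^ j) ^ 2 := by
      have : (0:ℝ) ≤ ∑ i, ((z - y).1 i) ^ 2 := by positivity
      nlinarith
    have habs : |z.2 - y.2| ≤ 2 ^ j := sq_sum_to_abs _ h2 _ h1
    have hyc : |y.2 - (2:ℝ) ^ j * lam.2| ≤ 2 ^ j / 2 := by
      obtain ⟨ha, hb⟩ := hy2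
      rw [abs_le]; constructor <;> linarith
    have := abs_sub_le z.2 y.2 ((2:ℝ) ^ j * lam.2)
    rw [hpow]; linarith

instance prodVolNegInv (n : ℕ) : (volume : Measure ((Fin n → ℝ) × ℝ)).IsNegInvariant := by
  constructor
  show Measure.map Neg.neg (volume : Measure ((Fin n → ℝ) × ℝ)) = volume
  have h : (Neg.neg : (Fin n → ℝ) × ℝ → (Fin n → ℝ) × ℝ) = Prod.map Neg.neg Neg.neg := by
    funext p; rfl
  rw [Measure.volume_eq_prod, h, ← Measure.map_prod_map _ _ measurable_neg measurable_neg,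
    Measure.map_neg_eq_self, Measure.map_neg_eq_self]

instance prodVolAddLeftInv (n : ℕ) :
    (volume : Measure ((Fin n → ℝ) × ℝ)).IsAddLeftInvariant := by
  rw [Measure.volume_eq_prod]; infer_instance

example (n : ℕ) (z : (Fin n → ℝ) × ℝ) :
    MeasurePreserving (fun t => z - t) (volume : Measure ((Fin n → ℝ) × ℝ)) volume :=
  Measure.measurePreserving_sub_left volume z

/-- localized bilinear kernel estimate. If `K ∈ L^∞(ℝ^{n+1})`,
`0 ≤ ψ ≤ 1` is supported in the ball `B(0, 2^j)`, and `F, G ∈ L¹ ∩ L²`, then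
`|⟨(ψK) ∗ F, G⟩| ≤ ‖ψK‖_∞ (∑_λ ‖Fχ_{Q_λ}‖₁²)^{1/2} (∑_λ ‖Gχ_{Q̃_λ}‖₁²)^{1/2}`. -/
theorem statement_15 (n : ℕ) (j : ℕ)
    (K : (Fin n → ℝ) × ℝ → ℂ) (ψ : (Fin n → ℝ) × ℝ → ℝ)
    (hK : MemLp K ⊤ volume)
    (hψ0 : ∀ z, 0 ≤ ψ z) (hψ1 : ∀ z, ψ z ≤ 1)
    (hψsupp : ∀ z, ψ z ≠ 0 → Real.sqrt ((∑ i, (z.1 i) ^ 2) + z.2 ^ 2) ≤ 2 ^ j)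
    (F G : (Fin n → ℝ) × ℝ → ℂ)
    (hF1 : Integrable F) (hF2 : MemLp F 2) (hG1 : Integrable G) (hG2 : MemLp G 2) :
    (‖∫ z : (Fin n → ℝ) × ℝ,
        (∫ y : (Fin n → ℝ) × ℝ, (ψ (z - y) : ℂ) * K (z - y) * F y) *
          (starRingEnd ℂ) (G z)‖₊ : ℝ≥0∞) ≤
      eLpNorm (fun z => (ψ z : ℂ) * K z) ⊤ volume *
        (∑' lam : (Fin n → ℤ) × ℤ,
            (∫⁻ z in latCube n j lam, (‖F z‖₊ : ℝ≥0∞)) ^ (2 : ℝ)) ^ (1 / (2 : ℝ)) *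
        (∑' lam : (Fin n → ℤ) × ℤ,
            (∫⁻ z in latCubeT n j lam, (‖G z‖₊ : ℝ≥0∞)) ^ (2 : ℝ)) ^ (1 / (2 : ℝ)) := by
  set M := eLpNorm (fun z => (ψ z : ℂ) * K z) ⊤ volume with hMdef
  -- M is finite
  have hMtop : M ≠ ⊤ := by
    have h1 : M ≤ eLpNorm K ⊤ volume := by
      refine eLpNorm_mono fun z => ?_
      rw [norm_mul, Complex.norm_real, Real.norm_eq_abs, abs_of_nonneg (hψ0 z)]
      exact mul_le_of_le_one_left (norm_nonneg _) (hψ1 z)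
    exact (lt_of_le_of_lt h1 hK.2).ne
  -- a.e. bound for ψK
  have hMae : ∀ᵐ w : (Fin n → ℝ) × ℝ, (‖(ψ w : ℂ) * K w‖₊ : ℝ≥0∞) ≤ M := by
    rw [hMdef, eLpNorm_exponent_top]
    exact ae_le_eLpNormEssSup
  -- the support set
  set S : Set ((Fin n → ℝ) × ℝ) :=
    {w | Real.sqrt ((∑ i, (w.1 i) ^ 2) + w.2 ^ 2) ≤ 2 ^ j} with hSdef
  have hS : MeasurableSet S := by
    have hc : Continuous fun w : (Fin n → ℝ) × ℝ =>
        Real.sqrt ((∑ i, (w.1 i) ^ 2) + w.2 ^ 2) := by fun_prop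
    exact (isClosed_le hc continuous_const).measurableSet
  set χ : ((Fin n → ℝ) × ℝ) → ℝ≥0∞ := S.indicator fun _ => 1 with hχdef
  set g : ((Fin n → ℝ) × ℝ) → ℝ≥0∞ :=
    fun y => ∫⁻ z, χ (z - y) * (‖G z‖₊ : ℝ≥0∞) with hgdef
  set a : ((Fin n → ℤ) × ℤ) → ℝ≥0∞ :=
    fun lam => ∫⁻ z in latCube n j lam, (‖F z‖₊ : ℝ≥0∞) with hadef
  set b : ((Fin n → ℤ) × ℤ) → ℝ≥0∞ :=
    fun lam => ∫⁻ z in latCubeT n j lam, (‖G z‖₊ : ℝ≥0∞) with hbdef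
  have hbne : ∀ lam, b lam ≠ ⊤ := fun lam =>
    (lt_of_le_of_lt (setLIntegral_le_lintegral _ _) hG1.2).ne
  -- bound on g on a cube
  have hgb : ∀ lam, ∀ y ∈ latCube n j lam, g y ≤ b lam := by
    intro lam y hy
    have hle : ∀ z, χ (z - y) * (‖G z‖₊ : ℝ≥0∞) ≤
        (latCubeT n j lam).indicator (fun z => (‖G z‖₊ : ℝ≥0∞)) z := by
      intro z
      by_cases hzS : z - y ∈ S
      · have hzT : z ∈ latCubeT n j lam := latCube_geom n j lam y z hy hzS
        rw [hχdef, Set.indicator_of_mem hzS, one_mul, Set.indicator_of_mem hzT]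
      · rw [hχdef, Set.indicator_of_notMem hzS, zero_mul]
        exact zero_le
    calc g y ≤ ∫⁻ z, (latCubeT n j lam).indicator (fun z => (‖G z‖₊ : ℝ≥0∞)) z :=
          lintegral_mono hle
      _ = b lam := lintegral_indicator (latCubeT_meas n j lam) _
  -- Step 1-4: bound LHS by double lintegral
  have step1 : (‖∫ z : (Fin n → ℝ) × ℝ,
        (∫ y : (Fin n → ℝ) × ℝ, (ψ (z - y) : ℂ) * K (z - y) * F y) *
          (starRingEnd ℂ) (G z)‖₊ : ℝ≥0∞) ≤
      ∫⁻ z, (∫⁻ y, (M * χ (z - y)) * (‖F y‖₊ : ℝ≥0∞)) * (‖G z‖₊ : ℝ≥0∞) := by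
    calc (‖∫ z : (Fin n → ℝ) × ℝ,
        (∫ y : (Fin n → ℝ) × ℝ, (ψ (z - y) : ℂ) * K (z - y) * F y) *
          (starRingEnd ℂ) (G z)‖₊ : ℝ≥0∞)
        ≤ ∫⁻ z, ‖(∫ y, (ψ (z - y) : ℂ) * K (z - y) * F y) * (starRingEnd ℂ) (G z)‖₊ :=
          enorm_integral_le_lintegral_enorm _
      _ = ∫⁻ z, (‖∫ y, (ψ (z - y) : ℂ) * K (z - y) * F y‖₊ : ℝ≥0∞) * ‖G z‖₊ := by
          refine lintegral_congr fun z => ?_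
          rw [nnnorm_mul, ENNReal.coe_mul, RCLike.nnnorm_conj]
      _ ≤ ∫⁻ z, (∫⁻ y, (‖(ψ (z - y) : ℂ) * K (z - y) * F y‖₊ : ℝ≥0∞)) * ‖G z‖₊ := by
          refine lintegral_mono fun z => ?_
          exact mul_le_mul_left (enorm_integral_le_lintegral_enorm _) _
      _ ≤ ∫⁻ z, (∫⁻ y, (M * χ (z - y)) * (‖F y‖₊ : ℝ≥0∞)) * (‖G z‖₊ : ℝ≥0∞) := by
          refine lintegral_mono fun z => ?_
          refine mul_le_mul_left (lintegral_mono_ae ?_) _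
          have hz : ∀ᵐ y : (Fin n → ℝ) × ℝ,
              (‖(ψ (z - y) : ℂ) * K (z - y)‖₊ : ℝ≥0∞) ≤ M := by
            rw [ae_iff]
            exact (Measure.measurePreserving_sub_left volume z)
              |>.quasiMeasurePreserving.preimage_null (ae_iff.1 hMae)
          refine hz.mono fun y hy => ?_
          rw [nnnorm_mul, ENNReal.coe_mul]
          refine mul_le_mul_left ?_ _
          by_cases hw : z - y ∈ S
          · rw [hχdef, Set.indicator_of_mem hw, mul_one]
            exact hy
          · have hψ0' : ψ (z - y) = 0 := by
              by_contra h
              exact hw (hψsupp _ h)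
            simp [hψ0']
  -- Step 5: rearrange
  have step5 : (∫⁻ z, (∫⁻ y, (M * χ (z - y)) * (‖F y‖₊ : ℝ≥0∞)) * (‖G z‖₊ : ℝ≥0∞)) =
      M * ∫⁻ z, ∫⁻ y, (‖F y‖₊ : ℝ≥0∞) * (χ (z - y) * (‖G z‖₊ : ℝ≥0∞)) := by
    rw [← lintegral_const_mul' M _ hMtop]
    refine lintegral_congr fun z => ?_
    calc (∫⁻ y, (M * χ (z - y)) * (‖F y‖₊ : ℝ≥0∞)) * (‖G z‖₊ : ℝ≥0∞)
        = ∫⁻ y, ((M * χ (z - y)) * (‖F y‖₊ : ℝ≥0∞)) * (‖G z‖₊ : ℝ≥0∞) :=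
          (lintegral_mul_const' _ _ ENNReal.coe_ne_top).symm
      _ = ∫⁻ y, M * ((‖F y‖₊ : ℝ≥0∞) * (χ (z - y) * (‖G z‖₊ : ℝ≥0∞))) :=
          lintegral_congr fun y => by ring
      _ = M * ∫⁻ y, (‖F y‖₊ : ℝ≥0∞) * (χ (z - y) * (‖G z‖₊ : ℝ≥0∞)) :=
          lintegral_const_mul' _ _ hMtop
  -- Step 6: Tonelli
  have hχm : Measurable fun p : ((Fin n → ℝ) × ℝ) × ((Fin n → ℝ) × ℝ) => χ (p.1 - p.2) :=
    (measurable_const.indicator hS).comp (measurable_fst.sub measurable_snd)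
  have hFm : AEMeasurable (fun p : ((Fin n → ℝ) × ℝ) × ((Fin n → ℝ) × ℝ) =>
      (‖F p.2‖₊ : ℝ≥0∞)) (volume.prod volume) :=
    hF1.aestronglyMeasurable.enorm.comp_quasiMeasurePreserving
      Measure.quasiMeasurePreserving_snd
  have hGm : AEMeasurable (fun p : ((Fin n → ℝ) × ℝ) × ((Fin n → ℝ) × ℝ) =>
      (‖G p.1‖₊ : ℝ≥0∞)) (volume.prod volume) :=
    hG1.aestronglyMeasurable.enorm.comp_quasiMeasurePreserving
      Measure.quasiMeasurePreserving_fst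
  have step6 : (∫⁻ z, ∫⁻ y, (‖F y‖₊ : ℝ≥0∞) * (χ (z - y) * (‖G z‖₊ : ℝ≥0∞))) =
      ∫⁻ y, ∫⁻ z, (‖F y‖₊ : ℝ≥0∞) * (χ (z - y) * (‖G z‖₊ : ℝ≥0∞)) := by
    apply lintegral_lintegral_swap
    exact hFm.mul (hχm.aemeasurable.mul hGm)
  -- Step 7: pull out the F factor
  have step7 : (∫⁻ y, ∫⁻ z, (‖F y‖₊ : ℝ≥0∞) * (χ (z - y) * (‖G z‖₊ : ℝ≥0∞))) =
      ∫⁻ y, (‖F y‖₊ : ℝ≥0∞) * g y :=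
    lintegral_congr fun y => lintegral_const_mul' _ _ ENNReal.coe_ne_top
  -- Step 8: partition into cubes
  have step8 : (∫⁻ y, (‖F y‖₊ : ℝ≥0∞) * g y) =
      ∑' lam : (Fin n → ℤ) × ℤ, ∫⁻ y in latCube n j lam, (‖F y‖₊ : ℝ≥0∞) * g y := by
    rw [← lintegral_iUnion (latCube_meas n j) (latCube_disj n j), latCube_cover,
      Measure.restrict_univ]
  -- Step 9: bound each summand
  have step9 : (∑' lam : (Fin n → ℤ) × ℤ, ∫⁻ y in latCube n j lam, (‖F y‖₊ : ℝ≥0∞) * g y) ≤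
      ∑' lam : (Fin n → ℤ) × ℤ, a lam * b lam := by
    refine ENNReal.tsum_le_tsum fun lam => ?_
    calc (∫⁻ y in latCube n j lam, (‖F y‖₊ : ℝ≥0∞) * g y)
        ≤ ∫⁻ y in latCube n j lam, (‖F y‖₊ : ℝ≥0∞) * b lam :=
          setLIntegral_mono' (latCube_meas n j lam) fun y hy =>
            mul_le_mul_right (hgb lam y hy) _
      _ = a lam * b lam := lintegral_mul_const' _ _ (hbne lam)
  -- Step 10: Cauchy-Schwarz
  have step10 : (∑' lam : (Fin n → ℤ) × ℤ, a lam * b lam) ≤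
      (∑' lam : (Fin n → ℤ) × ℤ, a lam ^ (2 : ℝ)) ^ (1 / (2 : ℝ)) *
        (∑' lam : (Fin n → ℤ) × ℤ, b lam ^ (2 : ℝ)) ^ (1 / (2 : ℝ)) := by
    have h22 : (2 : ℝ).HolderConjugate 2 := Real.HolderConjugate.two_two
    have := ENNReal.lintegral_mul_le_Lp_mul_Lq Measure.count h22
      (f := a) (g := b) (measurable_of_countable a).aemeasurable
      (measurable_of_countable b).aemeasurable
    simpa [lintegral_count] using this
  calc (‖∫ z : (Fin n → ℝ) × ℝ,
        (∫ y : (Fin n → ℝ) × ℝ, (ψ (z - y) : ℂ) * K (z - y) * F y) *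
          (starRingEnd ℂ) (G z)‖₊ : ℝ≥0∞)
      ≤ ∫⁻ z, (∫⁻ y, (M * χ (z - y)) * (‖F y‖₊ : ℝ≥0∞)) * (‖G z‖₊ : ℝ≥0∞) := step1
    _ = M * ∫⁻ z, ∫⁻ y, (‖F y‖₊ : ℝ≥0∞) * (χ (z - y) * (‖G z‖₊ : ℝ≥0∞)) := step5
    _ = M * ∫⁻ y, (‖F y‖₊ : ℝ≥0∞) * g y := by rw [step6, step7]
    _ = M * ∑' lam : (Fin n → ℤ) × ℤ, ∫⁻ y in latCube n j lam, (‖F y‖₊ : ℝ≥0∞) * g y := by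
        rw [step8]
    _ ≤ M * ∑' lam : (Fin n → ℤ) × ℤ, a lam * b lam := mul_le_mul_right step9 _
    _ ≤ M * ((∑' lam : (Fin n → ℤ) × ℤ, a lam ^ (2 : ℝ)) ^ (1 / (2 : ℝ)) *
        (∑' lam : (Fin n → ℤ) × ℤ, b lam ^ (2 : ℝ)) ^ (1 / (2 : ℝ))) :=
          mul_le_mul_right step10 _
    _ = M * (∑' lam : (Fin n → ℤ) × ℤ, a lam ^ (2 : ℝ)) ^ (1 / (2 : ℝ)) *
        (∑' lam : (Fin n → ℤ) × ℤ, b lam ^ (2 : ℝ)) ^ (1 / (2 : ℝ)) := by rw [mul_assoc]
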